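/- Let G be a chordal graph and I ⊆ V(G). Then the graph G′ obtained from G by deleting all edges between vertices of I has no induced odd cycle of length at least 5 (no odd hole). -/

import Mathlib

open SimpleGraph
open Fin.NatCast Fin.CommRing

variable {V : Type*}

/-- Number of connected components of a graph. -/
noncomputable def numComponents (G : SimpleGraph V) : ℕ := Nat.card G.ConnectedComponent

/-- A vertex is a cut vertex if its removal increases the number of connected components. -/
def IsCutVertex (G : SimpleGraph V) (v : V) : Prop :=
  numComponents G < numComponents (G.induce {u | u ≠ v})

/-- `T` is a spanning tree of `G`: a subgraph on all vertices of `G` that is a tree. -/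
def IsSpanningTree (G T : SimpleGraph V) : Prop := T ≤ G ∧ T.IsTree

/-- `v` is dominated by `S` in the graph `T`. -/
def DominatedIn (T : SimpleGraph V) (S : Set V) (v : V) : Prop :=
  v ∈ S ∨ ∃ u ∈ S, T.Adj v u

/-- `v` is simultaneously dominated by `S`: dominated in every spanning tree of `G`. -/
def SimDominated (G : SimpleGraph V) (S : Set V) (v : V) : Prop :=
  ∀ T : SimpleGraph V, IsSpanningTree G T → DominatedIn T S v

/-- `S` is a simultaneous dominating set of `G`. -/
def IsSDSet (G : SimpleGraph V) (S : Set V) : Prop := ∀ v, SimDominated G S v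

/-- `C` is a vertex cover of `G`. -/
def IsVertexCover (G : SimpleGraph V) (C : Set V) : Prop :=
  ∀ ⦃u v : V⦄, G.Adj u v → u ∈ C ∨ v ∈ C

/-- A block of `G`: a maximal vertex set inducing a connected subgraph without cut vertices. -/
def IsBlock (G : SimpleGraph V) (B : Set V) : Prop :=
  B.Nonempty ∧ (G.induce B).Connected ∧ (∀ x, ¬ IsCutVertex (G.induce B) x) ∧
    ∀ B' : Set V, B ⊆ B' → (G.induce B').Connected →
      (∀ x, ¬ IsCutVertex (G.induce B') x) → B' = B

/-- 2-connected: connected, at least 3 vertices, no cut vertex. -/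
def TwoConnected (G : SimpleGraph V) [Fintype V] : Prop :=
  G.Connected ∧ 3 ≤ Fintype.card V ∧ ∀ v, ¬ IsCutVertex G v

/-- Colours 1, 0, 0̂. -/
inductive Col : Type
  | one | zero | zhat
deriving DecidableEq

/-- `S` is an `f`-respecting simultaneous dominating set of `G`. -/
def RespSDS (G : SimpleGraph V) (f : V → Col) (S : Set V) : Prop :=
  (∀ v, f v = Col.one → v ∈ S) ∧ ∀ v, f v = Col.zhat → SimDominated G S v

/-- A minimum `f`-respecting simultaneous dominating set. -/
def MinRespSDS (G : SimpleGraph V) (f : V → Col) (S : Set V) : Prop :=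
  RespSDS G f S ∧ ∀ S' : Set V, RespSDS G f S' → S.ncard ≤ S'.ncard

/-- A graph is chordal iff it has no induced cycle of length at least 4. -/
def IsChordal (G : SimpleGraph V) : Prop :=
  ∀ n : ℕ, 4 ≤ n → IsEmpty (SimpleGraph.cycleGraph n ↪g G)

/-- `G − E(G[I])`: delete all edges between vertices of `I`. -/
def removeInside (G : SimpleGraph V) (I : Set V) : SimpleGraph V where
  Adj u w := G.Adj u w ∧ ¬(u ∈ I ∧ w ∈ I)
  symm := ⟨fun u w ⟨h, h'⟩ => ⟨h.symm, fun ⟨a, b⟩ => h' ⟨b, a⟩⟩⟩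
  loopless := ⟨fun u h => G.loopless.irrefl u h.1⟩

/-- `G` has an odd hole: an induced cycle of odd length at least 5. -/
def HasOddHole (G : SimpleGraph V) : Prop :=
  ∃ n : ℕ, 5 ≤ n ∧ Odd n ∧ Nonempty (SimpleGraph.cycleGraph n ↪g G)

/-- Perfect graph, via the strong perfect graph theorem characterization:
no odd hole and no odd antihole (an odd antihole of `G` is an odd hole of `Gᶜ`). -/
def IsPerfect (G : SimpleGraph V) : Prop := ¬ HasOddHole G ∧ ¬ HasOddHole Gᶜ

private lemma removeInside_adj' {G : SimpleGraph V} {I : Set V} {u v : V} :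
    (removeInside G I).Adj u v ↔ G.Adj u v ∧ ¬(u ∈ I ∧ v ∈ I) := Iff.rfl

open Classical in
/-- counts whether the path edge `(u, u+1)` has both ends in `I`. -/
private noncomputable def cnt (I : Set V) (w : ℕ → V) (u : ℕ) : ℕ :=
  if w u ∈ I ∧ w (u + 1) ∈ I then 1 else 0

private lemma cnt_pos {I : Set V} {w : ℕ → V} {u : ℕ} (h1 : w u ∈ I) (h2 : w (u + 1) ∈ I) :
    cnt I w u = 1 := by unfold cnt; rw [if_pos ⟨h1, h2⟩]

private lemma cnt_neg {I : Set V} {w : ℕ → V} {u : ℕ} (h : ¬(w u ∈ I ∧ w (u + 1) ∈ I)) :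
    cnt I w u = 0 := by unfold cnt; rw [if_neg h]

private lemma cnt_congr {I : Set V} {w1 w2 : ℕ → V} {u v : ℕ}
    (h1 : w1 u = w2 v) (h2 : w1 (u + 1) = w2 (v + 1)) : cnt I w1 u = cnt I w2 v := by
  unfold cnt; rw [h1, h2]

private lemma mod_two_helper {n x : ℕ} (h : x < 2 * n) :
    x % n = x ∨ (n ≤ x ∧ x % n + n = x) := by
  rcases Nat.lt_or_ge x n with h' | h'
  · exact Or.inl (Nat.mod_eq_of_lt h')
  · right
    refine ⟨h', ?_⟩
    rw [Nat.mod_eq_sub_mod h', Nat.mod_eq_of_lt (by omega)]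
    omega

private lemma fin_val_sub_add {n : ℕ} (a b : Fin n) (h : a ≠ b) :
    (a - b).val + (b - a).val = n := by
  have ha := a.isLt
  have hb := b.isLt
  have hne : a.val ≠ b.val := fun e => h (Fin.ext e)
  have e1 : (a - b).val = (n - b.val + a.val) % n := rfl
  have e2 : (b - a).val = (n - a.val + b.val) % n := rfl
  have h1 := mod_two_helper (n := n) (x := n - b.val + a.val) (by omega)
  have h2 := mod_two_helper (n := n) (x := n - a.val + b.val) (by omega)
  omega

private lemma cyc_shift_adj_iff {n : ℕ} [NeZero n] (hn : 3 ≤ n) (a : Fin n) {s t : ℕ}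
    (hst : s ≤ t) (ht : t < n) :
    (SimpleGraph.cycleGraph n).Adj (a + (s : Fin n)) (a + (t : Fin n)) ↔
      (t = s + 1 ∨ (s = 0 ∧ t + 1 = n)) := by
  obtain ⟨m, rfl⟩ : ∃ m, n = m + 2 := ⟨n - 2, by omega⟩
  rw [SimpleGraph.cycleGraph_adj]
  have hc : ((a + (t : Fin (m + 2))) - (a + (s : Fin (m + 2)))) = ((t - s : ℕ) : Fin (m + 2)) := by
    rw [Nat.cast_sub hst]; ring
  have hc' : ((a + (s : Fin (m + 2))) - (a + (t : Fin (m + 2)))) = -((t - s : ℕ) : Fin (m + 2)) := by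
    rw [Nat.cast_sub hst]; ring
  rw [hc, hc']
  have hcast_inj : ∀ x y : ℕ, x < m + 2 → y < m + 2 →
      (((x : ℕ) : Fin (m + 2)) = ((y : ℕ) : Fin (m + 2)) ↔ x = y) := by
    intro x y hx hy
    rw [Fin.ext_iff, Fin.val_natCast, Fin.val_natCast, Nat.mod_eq_of_lt hx, Nat.mod_eq_of_lt hy]
  have h0 : ((m + 2 : ℕ) : Fin (m + 2)) = 0 := Fin.natCast_self _
  have hneg1 : ((m + 1 : ℕ) : Fin (m + 2)) = -1 := by
    have hz : ((m + 1 : ℕ) : Fin (m + 2)) + 1 = 0 := by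
      rw [← h0]; push_cast; ring
    exact eq_neg_of_add_eq_zero_left hz
  have e1 : (((t - s : ℕ) : Fin (m + 2)) = 1) ↔ t - s = 1 := by
    rw [show (1 : Fin (m + 2)) = ((1 : ℕ) : Fin (m + 2)) by push_cast; rfl]
    exact hcast_inj _ _ (by omega) (by omega)
  have e2 : (-((t - s : ℕ) : Fin (m + 2)) = 1) ↔ t - s = m + 1 := by
    rw [neg_eq_iff_eq_neg, ← hneg1]
    exact hcast_inj _ _ (by omega) (by omega)
  rw [e1, e2]
  omega

private lemma chordal_no_cycle {G : SimpleGraph V} (hG : IsChordal G) {m : ℕ} (hm : 4 ≤ m)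
    (w : ℕ → V)
    (hinj : ∀ s t, s < m → t < m → w s = w t → s = t)
    (hadj : ∀ s, s + 1 < m → G.Adj (w s) (w (s + 1)))
    (hend : G.Adj (w 0) (w (m - 1)))
    (hnc : ∀ s t, s + 2 ≤ t → t < m → ¬(s = 0 ∧ t = m - 1) → ¬G.Adj (w s) (w t)) :
    False := by
  haveI : NeZero m := ⟨by omega⟩
  have char : ∀ j k : Fin m, (SimpleGraph.cycleGraph m).Adj j k ↔
      (k.val = j.val + 1 ∨ (j.val = 0 ∧ k.val + 1 = m) ∨ j.val = k.val + 1 ∨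
        (k.val = 0 ∧ j.val + 1 = m)) := by
    intro j k
    have hj := j.isLt; have hk := k.isLt
    rcases Nat.le_total j.val k.val with h | h
    · have h2 := cyc_shift_adj_iff (by omega) (0 : Fin m) h k.isLt
      simp only [zero_add, Fin.cast_val_eq_self] at h2
      rw [h2]; omega
    · have h2 := cyc_shift_adj_iff (by omega) (0 : Fin m) h j.isLt
      simp only [zero_add, Fin.cast_val_eq_self] at h2
      rw [SimpleGraph.adj_comm, h2]; omega
  refine (hG m hm).elim ⟨⟨fun j => w j.val, ?_⟩, ?_⟩
  · intro j k h
    exact Fin.ext (hinj j.val k.val j.isLt k.isLt h)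
  · intro j k
    show G.Adj (w j.val) (w k.val) ↔ _
    rw [char j k]
    constructor
    · intro hA
      by_contra hnot
      push_neg at hnot
      obtain ⟨h1, h2, h3, h4⟩ := hnot
      rcases Nat.lt_trichotomy j.val k.val with hlt | heq | hlt
      · exact hnc j.val k.val (by omega) k.isLt (by omega) hA
      · rw [heq] at hA; exact G.loopless.irrefl _ hA
      · exact hnc k.val j.val (by omega) j.isLt (by omega) hA.symm
    · intro hA
      rcases hA with h | h | h | h
      · rw [h]; exact hadj j.val (by omega)
      · rw [h.1, show k.val = m - 1 by omega]; exact hend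
      · rw [h]; exact (hadj k.val (by omega)).symm
      · rw [h.1, show j.val = m - 1 by omega]; exact hend.symm

private lemma key_lemma {G : SimpleGraph V} (hG : IsChordal G) (I : Set V) :
    ∀ L : ℕ, ∀ l : ℕ, l ≤ L → 2 ≤ l → ∀ w : ℕ → V,
      (∀ s t, s ≤ l → t ≤ l → w s = w t → s = t) →
      (∀ s, s < l → G.Adj (w s) (w (s + 1))) →
      G.Adj (w 0) (w l) → w 0 ∈ I → w l ∈ I →
      (∀ s t, s + 2 ≤ t → t ≤ l → ¬(s = 0 ∧ t = l) → G.Adj (w s) (w t) →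
        w s ∈ I ∧ w t ∈ I) →
      (l + ∑ u ∈ Finset.range l, cnt I w u) % 2 = 0 := by
  classical
  intro L
  induction L with
  | zero => intro l hl h2 _ _ _ _ _ _ _; omega
  | succ L ih =>
    intro l hlL h2 w hinj hadj hend h0I hlI hch
    by_cases hred : l ≤ L
    · exact ih l hred h2 w hinj hadj hend h0I hlI hch
    by_cases hchord : ∃ s t, s + 2 ≤ t ∧ t ≤ l ∧ ¬(s = 0 ∧ t = l) ∧ G.Adj (w s) (w t)
    · obtain ⟨s, t, hst, htl, hnst, hadjst⟩ := hchord
      obtain ⟨hsI, htI⟩ := hch s t hst htl hnst hadjst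
      -- inner path along the chord
      obtain ⟨W1, hV1⟩ : ∃ W1 : ℕ → V, ∀ u, W1 u = w (s + u) := ⟨_, fun _ => rfl⟩
      have inner := ih (t - s) (by omega) (by omega) W1
        (by
          intro u v hu hv he
          rw [hV1 u, hV1 v] at he
          have := hinj (s + u) (s + v) (by omega) (by omega) he
          omega)
        (by
          intro u hu
          rw [hV1 u, hV1 (u + 1), show s + (u + 1) = (s + u) + 1 by omega]
          exact hadj (s + u) (by omega))
        (by
          rw [hV1 0, hV1 (t - s), show s + 0 = s by omega, show s + (t - s) = t by omega]
          exact hadjst)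
        (by rw [hV1 0, show s + 0 = s by omega]; exact hsI)
        (by rw [hV1 (t - s), show s + (t - s) = t by omega]; exact htI)
        (by
          intro u v huv hvl hne hA
          rw [hV1 u, hV1 v] at hA ⊢
          exact hch (s + u) (s + v) (by omega) (by omega) (by omega) hA)
      -- outer path, replacing the inner arc by the chord
      obtain ⟨W, hW1, hW2⟩ : ∃ W : ℕ → V, (∀ u, u ≤ s → W u = w u) ∧
          (∀ u, s < u → W u = w (u + (t - s - 1))) :=
        ⟨fun u => if u ≤ s then w u else w (u + (t - s - 1)),
          fun u hu => if_pos hu, fun u hu => if_neg (by omega)⟩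
      have hWl2 : W (l - t + s + 1) = w l := by
        rw [hW2 _ (by omega)]; congr 1; omega
      have outer := ih (l - t + s + 1) (by omega) (by omega) W
        (by
          intro u v hu hv he
          by_cases h1 : u ≤ s <;> by_cases h2' : v ≤ s
          · rw [hW1 u h1, hW1 v h2'] at he; exact hinj u v (by omega) (by omega) he
          · rw [hW1 u h1, hW2 v (by omega)] at he
            have := hinj u (v + (t - s - 1)) (by omega) (by omega) he; omega
          · rw [hW2 u (by omega), hW1 v h2'] at he
            have := hinj (u + (t - s - 1)) v (by omega) (by omega) he; omega
          · rw [hW2 u (by omega), hW2 v (by omega)] at he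
            have := hinj (u + (t - s - 1)) (v + (t - s - 1)) (by omega) (by omega) he; omega)
        (by
          intro u hu
          by_cases h1 : u + 1 ≤ s
          · rw [hW1 u (by omega), hW1 (u + 1) h1]; exact hadj u (by omega)
          by_cases h2' : u ≤ s
          · have hus : u = s := by omega
            subst hus
            rw [hW1 u le_rfl, hW2 (u + 1) (by omega), show u + 1 + (t - u - 1) = t by omega]
            exact hadjst
          · rw [hW2 u (by omega), hW2 (u + 1) (by omega),
              show u + 1 + (t - s - 1) = (u + (t - s - 1)) + 1 by omega]
            exact hadj (u + (t - s - 1)) (by omega))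
        (by rw [hW1 0 (by omega), hWl2]; exact hend)
        (by rw [hW1 0 (by omega)]; exact h0I)
        (by rw [hWl2]; exact hlI)
        (by
          intro u v huv hvl hne hA
          by_cases h1 : u ≤ s <;> by_cases h2' : v ≤ s
          · rw [hW1 u h1, hW1 v h2'] at hA ⊢
            exact hch u v huv (by omega) (by omega) hA
          · rw [hW1 u h1, hW2 v (by omega)] at hA ⊢
            exact hch u (v + (t - s - 1)) (by omega) (by omega) (by omega) hA
          · omega
          · rw [hW2 u (by omega), hW2 v (by omega)] at hA ⊢
            exact hch (u + (t - s - 1)) (v + (t - s - 1)) (by omega) (by omega) (by omega) hA)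
      -- now combine the two parity facts
      have hS1 : ∑ u ∈ Finset.range (t - s), cnt I W1 u
          = ∑ u ∈ Finset.Ico s t, cnt I w u := by
        rw [Finset.sum_Ico_eq_sum_range]
        refine Finset.sum_congr rfl fun u hu => ?_
        exact cnt_congr (hV1 u) (by rw [hV1 (u + 1), show s + (u + 1) = s + u + 1 by omega])
      have hS2 : ∑ u ∈ Finset.range (l - t + s + 1), cnt I W u
          = ((∑ u ∈ Finset.Ico 0 s, cnt I w u) + 1)
            + ∑ u ∈ Finset.Ico t l, cnt I w u := by
        rw [Finset.range_eq_Ico,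
          ← Finset.sum_Ico_consecutive _ (show 0 ≤ s + 1 by omega)
            (show s + 1 ≤ l - t + s + 1 by omega),
          Finset.sum_Ico_succ_top (show 0 ≤ s by omega)]
        congr 1
        · congr 1
          · refine Finset.sum_congr rfl fun u hu => ?_
            have hu' : u < s := (Finset.mem_Ico.mp hu).2
            exact cnt_congr (hW1 u (by omega)) (hW1 (u + 1) (by omega))
          · exact cnt_pos (by rw [hW1 s le_rfl]; exact hsI)
              (by rw [hW2 (s + 1) (by omega), show s + 1 + (t - s - 1) = t by omega]; exact htI)
        · rw [Finset.sum_Ico_eq_sum_range, Finset.sum_Ico_eq_sum_range,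
            show l - t + s + 1 - (s + 1) = l - t by omega]
          refine Finset.sum_congr rfl fun u hu => ?_
          exact cnt_congr
            (by rw [hW2 (s + 1 + u) (by omega), show s + 1 + u + (t - s - 1) = t + u by omega])
            (by rw [hW2 (s + 1 + u + 1) (by omega),
                show s + 1 + u + 1 + (t - s - 1) = t + u + 1 by omega])
      have hSall : ∑ u ∈ Finset.range l, cnt I w u
          = ((∑ u ∈ Finset.Ico 0 s, cnt I w u)
              + ∑ u ∈ Finset.Ico s t, cnt I w u)
            + ∑ u ∈ Finset.Ico t l, cnt I w u := by
        rw [Finset.range_eq_Ico,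
          ← Finset.sum_Ico_consecutive _ (show (0 : ℕ) ≤ t by omega) htl,
          ← Finset.sum_Ico_consecutive _ (show (0 : ℕ) ≤ s by omega) (show s ≤ t by omega)]
      rw [hS1] at inner
      rw [hS2] at outer
      rw [hSall]
      omega
    · -- no chord
      push_neg at hchord
      by_cases hl2 : l = 2
      · subst hl2
        rw [Finset.sum_range_succ, Finset.sum_range_succ, Finset.sum_range_zero]
        by_cases h1 : w 1 ∈ I
        · rw [cnt_pos h0I h1, cnt_pos h1 hlI]
          omega
        · rw [cnt_neg (fun hh => h1 hh.2), cnt_neg (fun hh => h1 hh.1)]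
          omega

      · exact (chordal_no_cycle hG (m := l + 1) (by omega) w
          (fun x y hx hy => hinj x y (by omega) (by omega))
          (fun x hx => hadj x (by omega))
          hend
          (fun x y hxy hy hne => hchord x y hxy (by omega) (fun hx0 hyl => hne ⟨hx0, hyl⟩))).elim

private lemma arc_even {G : SimpleGraph V} (hG : IsChordal G) (I : Set V) {n : ℕ} (hn : 5 ≤ n)
    (e : SimpleGraph.cycleGraph n ↪g removeInside G I) {a b : Fin n}
    (hadj : G.Adj (e a) (e b)) (hncyc : ¬(SimpleGraph.cycleGraph n).Adj a b) :
    (b - a).val % 2 = 0 ∧ 2 ≤ (b - a).val ∧ (b - a).val ≤ n - 2 := by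
  haveI : NeZero n := ⟨by omega⟩
  have hab : a ≠ b := by rintro rfl; exact G.loopless.irrefl _ hadj
  have hbval : b = a + (((b - a).val : ℕ) : Fin n) := by
    rw [Fin.cast_val_eq_self]; ring
  have hlt : (b - a).val < n := (b - a).isLt
  have hne0 : (b - a).val ≠ 0 := by
    intro h
    exact hab (sub_eq_zero.mp (Fin.ext (by simpa using h))).symm
  have hGA : ∀ x y : Fin n, (SimpleGraph.cycleGraph n).Adj x y →
      G.Adj (e x) (e y) ∧ ¬(e x ∈ I ∧ e y ∈ I) := by
    intro x y h
    exact removeInside_adj'.mp (e.map_adj_iff.mpr h)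
  have hIget : ∀ x y : Fin n, ¬(SimpleGraph.cycleGraph n).Adj x y → G.Adj (e x) (e y) →
      e x ∈ I ∧ e y ∈ I := by
    intro x y h hA
    have h2 : ¬(removeInside G I).Adj (e x) (e y) := fun hh => h (e.map_adj_iff.mp hh)
    by_contra hc
    exact h2 (removeInside_adj'.mpr ⟨hA, hc⟩)
  have hiff := cyc_shift_adj_iff (n := n) (by omega) a (s := 0) (t := (b - a).val)
    (by omega) hlt
  rw [show ((0 : ℕ) : Fin n) = 0 by simp, add_zero, ← hbval] at hiff
  have hbound : ¬((b - a).val = 0 + 1 ∨ (0 = 0 ∧ (b - a).val + 1 = n)) :=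
    fun h => hncyc (hiff.mpr h)
  have hl2 : 2 ≤ (b - a).val := by omega
  have hln2 : (b - a).val ≤ n - 2 := by omega
  -- the walk along the arc
  obtain ⟨w, hw⟩ : ∃ w : ℕ → V, ∀ u, w u = e (a + (u : Fin n)) := ⟨_, fun _ => rfl⟩
  have hImem : e a ∈ I ∧ e b ∈ I := hIget a b hncyc hadj
  have hcycadj : ∀ u, u < (b - a).val →
      (SimpleGraph.cycleGraph n).Adj (a + (u : Fin n)) (a + ((u + 1 : ℕ) : Fin n)) := by
    intro u hu
    exact (cyc_shift_adj_iff (by omega) a (by omega) (by omega)).mpr (Or.inl rfl)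
  have hkey := key_lemma hG I (b - a).val (b - a).val le_rfl (by omega) w
    (by
      intro s t hs ht he
      rw [hw s, hw t] at he
      have h2 : a + ((s : ℕ) : Fin n) = a + ((t : ℕ) : Fin n) := e.injective he
      have h3 := congrArg Fin.val (add_left_cancel h2)
      rw [Fin.val_cast_of_lt (by omega), Fin.val_cast_of_lt (by omega)] at h3
      exact h3)
    (by
      intro s hs
      rw [hw s, hw (s + 1)]
      exact (hGA _ _ (hcycadj s hs)).1)
    (by
      rw [hw 0, hw (b - a).val, show ((0 : ℕ) : Fin n) = 0 by simp, add_zero, ← hbval]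
      exact hadj)
    (by
      rw [hw 0, show ((0 : ℕ) : Fin n) = 0 by simp, add_zero]
      exact hImem.1)
    (by
      rw [hw (b - a).val, ← hbval]
      exact hImem.2)
    (by
      intro s t hst htl hne hA
      have hnc : ¬(SimpleGraph.cycleGraph n).Adj (a + (s : Fin n)) (a + (t : Fin n)) := by
        rw [cyc_shift_adj_iff (by omega) a (by omega) (by omega)]
        omega
      rw [hw s, hw t] at hA ⊢
      exact hIget _ _ hnc hA)
  have hc0 : ∑ u ∈ Finset.range (b - a).val, cnt I w u = 0 := by
    refine Finset.sum_eq_zero fun u hu => ?_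
    have hu' : u < (b - a).val := Finset.mem_range.mp hu
    have hnb := (hGA _ _ (hcycadj u hu')).2
    refine cnt_neg ?_
    rw [hw u, hw (u + 1)]
    exact hnb
  rw [hc0] at hkey
  exact ⟨by omega, hl2, hln2⟩

/-- If `G` is chordal and `I ⊆ V(G)`, then `G′ = G − E(G[I])` has no odd hole. -/
theorem stmt13 (G : SimpleGraph V) (hG : IsChordal G) (I : Set V) :
    ¬ HasOddHole (removeInside G I) := by
  rintro ⟨n, hn5, hodd, ⟨e⟩⟩
  haveI : NeZero n := ⟨by omega⟩
  by_cases hch : ∃ a b : Fin n, ¬(SimpleGraph.cycleGraph n).Adj a b ∧ G.Adj (e a) (e b)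
  · obtain ⟨a, b, hnadj, hadj⟩ := hch
    have hab : a ≠ b := by rintro rfl; exact G.loopless.irrefl _ hadj
    have harc := arc_even hG I hn5 e hadj hnadj
    have harc' := arc_even hG I hn5 e hadj.symm (fun h => hnadj h.symm)
    have hsum := fin_val_sub_add a b hab
    obtain ⟨k, hk⟩ := hodd
    omega
  · push_neg at hch
    refine (hG n (by omega)).elim ⟨e.toEmbedding, fun {j k} => ?_⟩
    constructor
    · intro hA
      by_contra hncyc
      exact hch j k hncyc hA
    · intro h
      exact (removeInside_adj'.mp (e.map_adj_iff.mpr h)).1
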